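/- Let f(x) be a non-constant Laurent polynomial over ℚ in one variable satisfying f(x) = f(2/x) (as rational functions). Then there exists a polynomial g(X) ∈ ℚ[X] such that f(x) = g(x + 2/x). -/

import Mathlib

open Polynomial Finset

lemma aux_aeval_eq (p : ℚ[X]) : Polynomial.aeval (RatFunc.X : RatFunc ℚ) p
    = algebraMap (Polynomial ℚ) (RatFunc ℚ) p := by
  have h := Polynomial.aeval_algHom_apply
    (IsScalarTower.toAlgHom ℚ (Polynomial ℚ) (RatFunc ℚ)) Polynomial.X p
  simpa [RatFunc.algebraMap_X] using h

lemma pow_div_mul (k m : ℕ) (h : k ≤ m) :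
    ((2 : RatFunc ℚ)/RatFunc.X)^k * RatFunc.X^m = 2^k * RatFunc.X^(m-k) := by
  have hx : (RatFunc.X : RatFunc ℚ) ≠ 0 := RatFunc.X_ne_zero
  rw [div_pow, div_mul_eq_mul_div, show m = k + (m-k) by omega, pow_add,
    mul_comm (RatFunc.X ^ k), mul_div_assoc,
    mul_div_cancel_right₀ _ (pow_ne_zero _ hx)]
  rw [show k + (m - k) - k = m - k by omega]

lemma dick (j : ℕ) : Polynomial.aeval (RatFunc.X + 2 / RatFunc.X : RatFunc ℚ)
    (Polynomial.dickson 1 (2:ℚ) j)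
    = RatFunc.X ^ j + 2^j / RatFunc.X ^ j := by
  induction j using Nat.strong_induction_on with
  | _ j ih =>
    match j with
    | 0 => rw [Polynomial.dickson_zero]; push_cast; rw [map_sub, map_ofNat, map_one]; norm_num
    | 1 => simp [Polynomial.dickson_one]
    | (m+2) =>
      rw [Polynomial.dickson_add_two]
      simp only [map_sub, map_mul, Polynomial.aeval_X, Polynomial.aeval_C,
        ih (m+1) (by omega), ih m (by omega), map_ofNat]
      have hx : (RatFunc.X : RatFunc ℚ) ≠ 0 := RatFunc.X_ne_zero
      field_simp
      ring

lemma key (p : Polynomial ℚ) (n : ℕ) (hdeg : p.natDegree ≤ 2*n)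
    (hsym : (Polynomial.aeval (RatFunc.X : RatFunc ℚ) p) / RatFunc.X ^ n
        = (Polynomial.aeval (2 / RatFunc.X : RatFunc ℚ) p) / (2 / RatFunc.X) ^ n) :
    ∃ g : Polynomial ℚ,
      (Polynomial.aeval (RatFunc.X : RatFunc ℚ) p) / RatFunc.X ^ n
        = Polynomial.aeval (RatFunc.X + 2 / RatFunc.X : RatFunc ℚ) g := by
  have hx : (RatFunc.X : RatFunc ℚ) ≠ 0 := RatFunc.X_ne_zero
  have h2x : ((2:RatFunc ℚ) / RatFunc.X) ≠ 0 := by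
    refine div_ne_zero ?_ hx
    have h := RatFunc.algebraMap_ne_zero (two_ne_zero (α := ℚ[X]))
    rwa [map_ofNat] at h
  -- Step 1: clear denominators
  have E : (Polynomial.aeval (RatFunc.X : RatFunc ℚ) p) * 2^n
      = (Polynomial.aeval (2 / RatFunc.X : RatFunc ℚ) p) * RatFunc.X ^ (2*n) := by
    have h1 := (div_eq_div_iff (pow_ne_zero n hx) (pow_ne_zero n h2x)).mp hsym
    calc (Polynomial.aeval (RatFunc.X : RatFunc ℚ) p) * 2^n
        = (Polynomial.aeval (RatFunc.X : RatFunc ℚ) p) * ((2/RatFunc.X)^n * RatFunc.X ^ n) := by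
          rw [pow_div_mul n n le_rfl]; simp
      _ = (Polynomial.aeval (2 / RatFunc.X : RatFunc ℚ) p) * RatFunc.X^n * RatFunc.X ^ n := by
          rw [← mul_assoc, h1]
      _ = _ := by rw [mul_assoc, ← pow_add, two_mul]
  -- Step 2: represent RHS as a polynomial in X
  set q : Polynomial ℚ :=
    ∑ k ∈ Finset.range (2*n+1), Polynomial.C (p.coeff k * 2^k) * Polynomial.X^(2*n - k) with hq
  have E2 : (Polynomial.aeval (2 / RatFunc.X : RatFunc ℚ) p) * RatFunc.X ^ (2*n)
      = Polynomial.aeval (RatFunc.X : RatFunc ℚ) q := by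
    conv_lhs => rw [Polynomial.as_sum_range' p (2*n+1) (by omega)]
    rw [hq, map_sum, map_sum, Finset.sum_mul]
    apply Finset.sum_congr rfl
    intro k hk
    have hk' : k ≤ 2*n := by simpa using Nat.lt_succ_iff.mp (Finset.mem_range.mp hk)
    simp only [Polynomial.aeval_monomial, map_mul, map_pow, Polynomial.aeval_C,
      Polynomial.aeval_X, map_ofNat]
    rw [mul_assoc, pow_div_mul k (2*n) hk']
    ring
  -- Step 3: injectivity, polynomial identity
  have inj : Polynomial.C ((2:ℚ)^n) * p = q := by
    apply RatFunc.algebraMap_injective ℚ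
    rw [← aux_aeval_eq, ← aux_aeval_eq, map_mul, Polynomial.aeval_C]
    rw [← E2, ← E, map_pow, map_ofNat]
    ring
  -- Step 4: coefficient relation
  have rel : ∀ k, k ≤ 2*n → 2^n * p.coeff k = p.coeff (2*n - k) * 2^(2*n - k) := by
    intro k hk
    have := congrArg (fun r => Polynomial.coeff r k) inj
    simp only [Polynomial.coeff_C_mul] at this
    rw [hq, Polynomial.finset_sum_coeff] at this
    simp only [Polynomial.coeff_C_mul, Polynomial.coeff_X_pow] at this
    rw [Finset.sum_eq_single (2*n - k)] at this
    · rw [if_pos (by omega : k = 2*n - (2*n - k)), mul_one] at this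
      exact this
    · intro j hj hjne
      have hj' : j ≤ 2*n := Nat.lt_succ_iff.mp (Finset.mem_range.mp hj)
      rw [if_neg (by omega : ¬ (k = 2*n - j)), mul_zero]
    · intro h; exact absurd (Finset.mem_range.mpr (by omega)) h
  -- derived relation
  have rel2 : ∀ k, k < n → p.coeff (n+(k+1)) * 2^(k+1) = p.coeff (n-(k+1)) := by
    intro k hkn
    have h := rel (n-(k+1)) (by omega)
    rw [show 2*n - (n-(k+1)) = n+(k+1) by omega, pow_add] at h
    have h2n : (2:ℚ)^n ≠ 0 := pow_ne_zero n two_ne_zero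
    refine mul_left_cancel₀ h2n ?_
    rw [h]
    ring
  -- the polynomial g
  set e : ℕ → ℚ := fun k => if k = 0 then p.coeff n / 2 else p.coeff (n + k) with he
  have e0 : e 0 = p.coeff n / 2 := by simp [he]
  have es : ∀ k : ℕ, e (k+1) = p.coeff (n+(k+1)) := by intro k; simp [he]
  refine ⟨∑ k ∈ Finset.range (n+1), Polynomial.C (e k) * Polynomial.dickson 1 (2:ℚ) k, ?_⟩
  -- polynomial identity
  have P : p = ∑ k ∈ Finset.range (n+1),
      Polynomial.C (e k) * (Polynomial.X^(n+k) + Polynomial.C ((2:ℚ)^k) * Polynomial.X^(n-k)) := by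
    have hsplit : p = (∑ j ∈ Finset.range n, Polynomial.C (p.coeff j) * Polynomial.X^j)
        + ∑ k ∈ Finset.range (n+1), Polynomial.C (p.coeff (n+k)) * Polynomial.X^(n+k) := by
      conv_lhs => rw [Polynomial.as_sum_range' p (2*n+1) (by omega)]
      simp only [← Polynomial.C_mul_X_pow_eq_monomial]
      conv_lhs => rw [Finset.range_eq_Ico, ← Finset.sum_Ico_consecutive _ (Nat.zero_le n)
        (by omega : n ≤ 2*n+1)]
      congr 1
      · rw [← Finset.range_eq_Ico]
      · rw [Finset.sum_Ico_eq_sum_range, show 2*n+1-n = n+1 by omega]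
    have S0 : ∀ k ∈ Finset.range (n+1),
        Polynomial.C (e k) * (Polynomial.X^(n+k) + Polynomial.C ((2:ℚ)^k) * Polynomial.X^(n-k))
        = Polynomial.C (e k) * Polynomial.X^(n+k)
          + Polynomial.C (e k) * Polynomial.C ((2:ℚ)^k) * Polynomial.X^(n-k) := by
      intro k _; ring
    rw [Finset.sum_congr rfl S0, Finset.sum_add_distrib]
    have S1 : ∑ k ∈ Finset.range (n+1), Polynomial.C (e k) * Polynomial.X^(n+k)
        = (∑ k ∈ Finset.range n, Polynomial.C (p.coeff (n+(k+1))) * Polynomial.X^(n+(k+1)))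
          + Polynomial.C (p.coeff n / 2) * Polynomial.X^n := by
      rw [Finset.sum_range_succ']
      simp only [es, e0, Nat.add_zero]
    have S2 : ∑ k ∈ Finset.range (n+1),
        Polynomial.C (e k) * Polynomial.C ((2:ℚ)^k) * Polynomial.X^(n-k)
        = (∑ j ∈ Finset.range n, Polynomial.C (p.coeff j) * Polynomial.X^j)
          + Polynomial.C (p.coeff n / 2) * Polynomial.X^n := by
      rw [Finset.sum_range_succ']
      congr 1
      · calc ∑ k ∈ Finset.range n,
              Polynomial.C (e (k+1)) * Polynomial.C ((2:ℚ)^(k+1)) * Polynomial.X^(n-(k+1))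
            = ∑ k ∈ Finset.range n, Polynomial.C (p.coeff (n-1-k)) * Polynomial.X^(n-1-k) := by
              refine Finset.sum_congr rfl fun k hk => ?_
              have hkn : k < n := Finset.mem_range.mp hk
              rw [es, ← Polynomial.C_mul, rel2 k hkn, show n - (k+1) = n-1-k by omega]
          _ = ∑ j ∈ Finset.range n, Polynomial.C (p.coeff j) * Polynomial.X^j :=
              Finset.sum_range_reflect (fun j => Polynomial.C (p.coeff j) * Polynomial.X^j) n
      · simp [e0]
    rw [S1, S2]
    conv_lhs => rw [hsplit, Finset.sum_range_succ']
    have hCn : Polynomial.C (p.coeff n) = Polynomial.C (p.coeff n / 2)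
        + Polynomial.C (p.coeff n / 2) := by
      rw [← Polynomial.C_add, add_halves]
    simp only [Nat.add_zero]
    rw [hCn]
    ring
  -- evaluate
  have hG : Polynomial.aeval (RatFunc.X + 2 / RatFunc.X : RatFunc ℚ)
        (∑ k ∈ Finset.range (n+1), Polynomial.C (e k) * Polynomial.dickson 1 (2:ℚ) k)
        * RatFunc.X ^ n
      = Polynomial.aeval (RatFunc.X : RatFunc ℚ) p := by
    conv_rhs => rw [P]
    rw [map_sum, map_sum, Finset.sum_mul]
    refine Finset.sum_congr rfl (fun k hk => ?_)
    have hk' : k ≤ n := Nat.lt_succ_iff.mp (Finset.mem_range.mp hk)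
    rw [map_mul, Polynomial.aeval_C, dick k]
    simp only [map_mul, map_add, map_pow, Polynomial.aeval_C, Polynomial.aeval_X, map_ofNat]
    have h1 : ((2:RatFunc ℚ)^k / RatFunc.X^k) * RatFunc.X^n = 2^k * RatFunc.X^(n-k) := by
      rw [← div_pow, pow_div_mul k n hk']
    rw [mul_assoc, add_mul, h1, ← pow_add, Nat.add_comm k n]
  rw [div_eq_iff (pow_ne_zero n hx), ← hG]

/-- Any non-constant Laurent polynomial `f(x) = p(x)/x^n` over `ℚ` satisfying
`f(x) = f(2/x)` as rational functions is of the form `g(x + 2/x)` for a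
polynomial `g ∈ ℚ[X]`. -/
theorem stmt_0 (p : Polynomial ℚ) (n : ℕ)
    (hnc : ¬ ∃ c : ℚ,
      (Polynomial.aeval (RatFunc.X : RatFunc ℚ) p) / RatFunc.X ^ n = RatFunc.C c)
    (hsym : (Polynomial.aeval (RatFunc.X : RatFunc ℚ) p) / RatFunc.X ^ n
        = (Polynomial.aeval (2 / RatFunc.X : RatFunc ℚ) p) / (2 / RatFunc.X) ^ n) :
    ∃ g : Polynomial ℚ,
      (Polynomial.aeval (RatFunc.X : RatFunc ℚ) p) / RatFunc.X ^ n
        = Polynomial.aeval (RatFunc.X + 2 / RatFunc.X : RatFunc ℚ) g := by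
  have hx : (RatFunc.X : RatFunc ℚ) ≠ 0 := RatFunc.X_ne_zero
  have h2x : ((2:RatFunc ℚ) / RatFunc.X) ≠ 0 := by
    refine div_ne_zero ?_ hx
    have h := RatFunc.algebraMap_ne_zero (two_ne_zero (α := ℚ[X]))
    rwa [map_ofNat] at h
  set s := p.natDegree with hs
  have hdeg : (p * Polynomial.X ^ s).natDegree ≤ 2 * (n + s) := by
    calc (p * Polynomial.X ^ s).natDegree
        ≤ p.natDegree + (Polynomial.X ^ s : Polynomial ℚ).natDegree :=
          Polynomial.natDegree_mul_le
      _ ≤ s + s := by rw [Polynomial.natDegree_X_pow]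
      _ ≤ 2 * (n + s) := by omega
  have A : Polynomial.aeval (RatFunc.X : RatFunc ℚ) (p * Polynomial.X ^ s)
      / RatFunc.X ^ (n + s)
      = Polynomial.aeval (RatFunc.X : RatFunc ℚ) p / RatFunc.X ^ n := by
    rw [map_mul, map_pow, Polynomial.aeval_X, pow_add,
      mul_div_mul_right _ _ (pow_ne_zero s hx)]
  have B : Polynomial.aeval (2 / RatFunc.X : RatFunc ℚ) (p * Polynomial.X ^ s)
      / (2 / RatFunc.X) ^ (n + s)
      = Polynomial.aeval (2 / RatFunc.X : RatFunc ℚ) p / (2 / RatFunc.X) ^ n := by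
    rw [map_mul, map_pow, Polynomial.aeval_X, pow_add,
      mul_div_mul_right _ _ (pow_ne_zero s h2x)]
  obtain ⟨g, hg⟩ := key (p * Polynomial.X ^ s) (n + s) hdeg (by rw [A, B]; exact hsym)
  exact ⟨g, by rw [← A]; exact hg⟩
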